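/- The class 𝓙 is closed under convolution roots: if the n-fold convolution F^{n*} belongs to 𝓙 for some n ≥ 2, then F̄ ≍ F̄^{n*} and F ∈ 𝓙. -/

import Mathlib

open MeasureTheory Filter Set

/-- Tail of a distribution: `F̄(x) = μ(x, ∞)`. -/
noncomputable def tail (μ : Measure ℝ) (x : ℝ) : ℝ := (μ (Set.Ioi x)).toReal

/-- Conditional probability `P(A | X₁ + X₂ > x)` for two i.i.d. variables with law `μ`. -/
noncomputable def condPair (μ : Measure ℝ) (A : Set (ℝ × ℝ)) (x : ℝ) : ℝ :=
  ((μ.prod μ) (A ∩ {p | x < p.1 + p.2})).toReal / ((μ.prod μ) {p | x < p.1 + p.2}).toReal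

/-- The class 𝓙 : `lim_{K→∞} liminf_{x→∞} P(max(X₁,X₂) > x − K | X₁ + X₂ > x) = 1`. -/
def MemJ (μ : Measure ℝ) : Prop :=
  Tendsto (fun K : ℝ =>
      liminf (fun x : ℝ => condPair μ {p | x - K < max p.1 p.2} x) atTop)
    atTop (nhds 1)

/-- The class 𝓙 (equivalent form): for every nonnegative, unbounded, nondecreasing `g`,
`lim_{x→∞} P(min(X₁,X₂) > g(x) | X₁ + X₂ > x) = 0`. -/
def MemJg (μ : Measure ℝ) : Prop :=
  ∀ g : ℝ → ℝ, (∀ x, 0 ≤ g x) → Monotone g → (∀ M, ∃ x, M < g x) →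
    Tendsto (fun x : ℝ => condPair μ {p | g x < min p.1 p.2} x) atTop (nhds 0)

/-- Tail of the two-fold convolution: `F̄²*(x) = P(X₁ + X₂ > x)`. -/
noncomputable def tail2 (μ : Measure ℝ) (x : ℝ) : ℝ := ((μ.prod μ) {p | x < p.1 + p.2}).toReal

/-- Weak asymptotic tail-equivalence `F̄ ≍ Ḡ`:
`0 < liminf F̄(x)/Ḡ(x) ≤ limsup F̄(x)/Ḡ(x) < ∞`. -/
def WeakTailEquiv (μ ν : Measure ℝ) : Prop :=
  (∃ c : ℝ, 0 < c ∧ ∀ᶠ x in atTop, c * tail ν x ≤ tail μ x) ∧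
  (∃ C : ℝ, ∀ᶠ x in atTop, tail μ x ≤ C * tail ν x)

/-- Convolution of two laws on ℝ. -/
noncomputable def conv (μ ν : Measure ℝ) : Measure ℝ :=
  Measure.map (fun p : ℝ × ℝ => p.1 + p.2) (μ.prod ν)

/-- `n`-fold convolution `F^{n*}`. -/
noncomputable def nconv (μ : Measure ℝ) : ℕ → Measure ℝ
  | 0 => Measure.dirac 0
  | n + 1 => conv (nconv μ n) μ

/-! ### Part 0 : basics -/

lemma measurable_addfun : Measurable (fun p : ℝ × ℝ => p.1 + p.2) :=
  measurable_fst.add measurable_snd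

lemma measurableSet_S (x : ℝ) : MeasurableSet {p : ℝ × ℝ | x < p.1 + p.2} :=
  measurableSet_lt measurable_const measurable_addfun

instance conv_prob (μ ν : Measure ℝ) [IsProbabilityMeasure μ] [IsProbabilityMeasure ν] :
    IsProbabilityMeasure (conv μ ν) := by
  unfold conv
  exact Measure.isProbabilityMeasure_map measurable_addfun.aemeasurable

instance nconv_prob (μ : Measure ℝ) [IsProbabilityMeasure μ] (k : ℕ) :
    IsProbabilityMeasure (nconv μ k) := by
  induction k with
  | zero => exact Measure.dirac.isProbabilityMeasure
  | succ k ih => exact @conv_prob _ μ ih _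

lemma conv_apply (μ ν : Measure ℝ) [SFinite μ] [SFinite ν] {s : Set ℝ} (hs : MeasurableSet s) :
    conv μ ν s = (μ.prod ν) {p : ℝ × ℝ | p.1 + p.2 ∈ s} := by
  unfold conv
  rw [Measure.map_apply measurable_addfun hs]
  rfl

lemma prod_null_left (μ ν : Measure ℝ) [SFinite μ] [SFinite ν] {s : Set ℝ} (hs : μ s = 0) :
    (μ.prod ν) {p : ℝ × ℝ | p.1 ∈ s} = 0 := by
  have : {p : ℝ × ℝ | p.1 ∈ s} = s ×ˢ univ := by ext p; simp
  rw [this, Measure.prod_prod, hs, zero_mul]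

lemma prod_null_right (μ ν : Measure ℝ) [SFinite μ] [SFinite ν] {s : Set ℝ} (hs : ν s = 0) :
    (μ.prod ν) {p : ℝ × ℝ | p.2 ∈ s} = 0 := by
  have : {p : ℝ × ℝ | p.2 ∈ s} = univ ×ˢ s := by ext p; simp
  rw [this, Measure.prod_prod, hs, mul_zero]

lemma conv_null_neg (μ ν : Measure ℝ) [SFinite μ] [SFinite ν]
    (hμ : μ (Iio 0) = 0) (hν : ν (Iio 0) = 0) : conv μ ν (Iio 0) = 0 := by
  rw [conv_apply μ ν measurableSet_Iio]
  have hsub : {p : ℝ × ℝ | p.1 + p.2 ∈ Iio 0} ⊆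
      {p : ℝ × ℝ | p.1 ∈ Iio 0} ∪ {p : ℝ × ℝ | p.2 ∈ Iio 0} := by
    intro p hp
    simp only [mem_setOf_eq, mem_Iio, mem_union] at *
    by_contra h
    push_neg at h
    linarith [h.1, h.2]
  refine le_antisymm ?_ zero_le
  calc (μ.prod ν) {p : ℝ × ℝ | p.1 + p.2 ∈ Iio 0}
      ≤ (μ.prod ν) ({p : ℝ × ℝ | p.1 ∈ Iio 0} ∪ {p : ℝ × ℝ | p.2 ∈ Iio 0}) := measure_mono hsub
    _ ≤ (μ.prod ν) {p : ℝ × ℝ | p.1 ∈ Iio 0} + (μ.prod ν) {p : ℝ × ℝ | p.2 ∈ Iio 0} :=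
        measure_union_le _ _
    _ = 0 := by rw [prod_null_left μ ν hμ, prod_null_right μ ν hν, add_zero]

lemma nconv_null_neg (μ : Measure ℝ) [IsProbabilityMeasure μ] (hnn : μ (Iio 0) = 0) (k : ℕ) :
    (nconv μ k) (Iio 0) = 0 := by
  induction k with
  | zero =>
      show Measure.dirac 0 (Iio 0) = 0
      rw [Measure.dirac_apply' _ measurableSet_Iio]
      simp
  | succ k ih =>
      have : IsProbabilityMeasure (nconv μ k) := nconv_prob μ k
      exact conv_null_neg _ _ ih hnn

lemma tail_le_conv_right (μ ν : Measure ℝ) [IsProbabilityMeasure μ] [IsProbabilityMeasure ν]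
    (hν : ν (Iio 0) = 0) (x : ℝ) : μ (Ioi x) ≤ conv μ ν (Ioi x) := by
  rw [conv_apply μ ν measurableSet_Ioi]
  have hsub : (Ioi x) ×ˢ (Ici (0:ℝ)) ⊆ {p : ℝ × ℝ | p.1 + p.2 ∈ Ioi x} := by
    intro p hp
    simp only [mem_prod, mem_Ioi, mem_Ici, mem_setOf_eq] at *
    linarith [hp.1, hp.2]
  calc μ (Ioi x) = μ (Ioi x) * ν (Ici 0) := by
        have h1 : ν (Ici (0:ℝ)) = 1 := by
          rw [← compl_Iio, prob_compl_eq_one_sub measurableSet_Iio, hν, tsub_zero]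
        rw [h1, mul_one]
    _ = (μ.prod ν) ((Ioi x) ×ˢ (Ici (0:ℝ))) := (Measure.prod_prod _ _).symm
    _ ≤ _ := measure_mono hsub

lemma tail_le_conv_left (μ ν : Measure ℝ) [IsProbabilityMeasure μ] [IsProbabilityMeasure ν]
    (hμ : μ (Iio 0) = 0) (x : ℝ) : ν (Ioi x) ≤ conv μ ν (Ioi x) := by
  rw [conv_apply μ ν measurableSet_Ioi]
  have hsub : (Ici (0:ℝ)) ×ˢ (Ioi x) ⊆ {p : ℝ × ℝ | p.1 + p.2 ∈ Ioi x} := by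
    intro p hp
    simp only [mem_prod, mem_Ioi, mem_Ici, mem_setOf_eq] at *
    linarith [hp.1, hp.2]
  calc ν (Ioi x) = μ (Ici 0) * ν (Ioi x) := by
        have h1 : μ (Ici (0:ℝ)) = 1 := by
          rw [← compl_Iio, prob_compl_eq_one_sub measurableSet_Iio, hμ, tsub_zero]
        rw [h1, one_mul]
    _ = (μ.prod ν) ((Ici (0:ℝ)) ×ˢ (Ioi x)) := (Measure.prod_prod _ _).symm
    _ ≤ _ := measure_mono hsub


/-! ### conv algebra -/

lemma conv_comm (μ ν : Measure ℝ) [SFinite μ] [SFinite ν] : conv μ ν = conv ν μ := by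
  unfold conv
  rw [← Measure.prod_swap, Measure.map_map measurable_addfun measurable_swap]
  congr 1
  funext p
  simp [Function.comp, add_comm]

lemma conv_assoc (α β γ : Measure ℝ) [SFinite α] [SFinite β] [SFinite γ] :
    conv (conv α β) γ = conv α (conv β γ) := by
  unfold conv
  have h1 : (Measure.map (fun p : ℝ × ℝ => p.1 + p.2) (α.prod β)).prod γ
      = Measure.map (Prod.map (fun p : ℝ × ℝ => p.1 + p.2) id) ((α.prod β).prod γ) := by
    conv_lhs => rw [← Measure.map_id (μ := γ)]
    exact Measure.map_prod_map _ _ measurable_addfun measurable_id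
  have h2 : α.prod (Measure.map (fun p : ℝ × ℝ => p.1 + p.2) (β.prod γ))
      = Measure.map (Prod.map (id : ℝ → ℝ) (fun p : ℝ × ℝ => p.1 + p.2)) (α.prod (β.prod γ)) := by
    conv_lhs => rw [← Measure.map_id (μ := α)]
    exact Measure.map_prod_map _ _ measurable_id measurable_addfun
  rw [h1, h2, ← Measure.prodAssoc_prod,
    Measure.map_map measurable_addfun (measurable_addfun.prodMap measurable_id),
    Measure.map_map measurable_addfun (measurable_id.prodMap measurable_addfun),
    Measure.map_map (measurable_addfun.comp (measurable_id.prodMap measurable_addfun))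
      (MeasurableEquiv.prodAssoc).measurable]
  congr 1
  funext p
  simp only [Function.comp_apply, Prod.map_apply, id_eq, MeasurableEquiv.prodAssoc,
    MeasurableEquiv.coe_mk, Equiv.prodAssoc_apply]
  exact add_assoc _ _ _

lemma conv_dirac_left (μ : Measure ℝ) [SFinite μ] : conv (Measure.dirac 0) μ = μ := by
  unfold conv
  rw [Measure.dirac_prod, Measure.map_map measurable_addfun measurable_prodMk_left]
  have : ((fun p : ℝ × ℝ => p.1 + p.2) ∘ Prod.mk (0:ℝ)) = id := by
    funext a; simp
  rw [this, Measure.map_id]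

lemma conv_dirac_right (μ : Measure ℝ) [SFinite μ] : conv μ (Measure.dirac 0) = μ := by
  rw [conv_comm]; exact conv_dirac_left μ

lemma nconv_one (μ : Measure ℝ) [SFinite μ] : nconv μ 1 = μ := by
  show conv (Measure.dirac 0) μ = μ
  exact conv_dirac_left μ

lemma nconv_add (μ : Measure ℝ) [IsProbabilityMeasure μ] (i j : ℕ) :
    conv (nconv μ i) (nconv μ j) = nconv μ (i + j) := by
  induction j with
  | zero =>
      have : IsProbabilityMeasure (nconv μ i) := nconv_prob μ i
      simpa [nconv] using conv_dirac_right (nconv μ i)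
  | succ j ih =>
      have hi : IsProbabilityMeasure (nconv μ i) := nconv_prob μ i
      have hj : IsProbabilityMeasure (nconv μ j) := nconv_prob μ j
      show conv (nconv μ i) (conv (nconv μ j) μ) = conv (nconv μ (i + j)) μ
      rw [← conv_assoc, ih]

/-! ### tail monotonicity across convolution -/

lemma tail_nconv_mono (μ : Measure ℝ) [IsProbabilityMeasure μ] (hnn : μ (Iio 0) = 0)
    {i j : ℕ} (hij : i ≤ j) (x : ℝ) : (nconv μ i) (Ioi x) ≤ (nconv μ j) (Ioi x) := by
  obtain ⟨d, rfl⟩ := Nat.exists_eq_add_of_le hij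
  clear hij
  induction d with
  | zero => simp
  | succ d ih =>
      have hd : IsProbabilityMeasure (nconv μ (i + d)) := nconv_prob μ _
      rw [← Nat.add_assoc]
      refine le_trans ih ?_
      show _ ≤ (conv (nconv μ (i + d)) μ) (Ioi x)
      exact tail_le_conv_right _ _ hnn x

lemma tail_mu_le_nconv (μ : Measure ℝ) [IsProbabilityMeasure μ] (hnn : μ (Iio 0) = 0)
    {k : ℕ} (hk : 1 ≤ k) (x : ℝ) : μ (Ioi x) ≤ (nconv μ k) (Ioi x) := by
  have := tail_nconv_mono μ hnn hk x
  rwa [nconv_one] at this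


/-! ### Part 1 : pair basics -/

lemma tail_le_T2 (ν : Measure ℝ) [IsProbabilityMeasure ν] (hnn : ν (Iio 0) = 0) (x : ℝ) :
    ν (Ioi x) ≤ (ν.prod ν) {p : ℝ × ℝ | x < p.1 + p.2} := by
  have h1 : ν (Ici (0:ℝ)) = 1 := by
    rw [← compl_Iio, prob_compl_eq_one_sub measurableSet_Iio, hnn, tsub_zero]
  have hsub : (Ioi x) ×ˢ (Ici (0:ℝ)) ⊆ {p : ℝ × ℝ | x < p.1 + p.2} := by
    intro p hp
    simp only [mem_prod, mem_Ioi, mem_Ici, mem_setOf_eq] at *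
    linarith [hp.1, hp.2]
  calc ν (Ioi x) = ν (Ioi x) * ν (Ici 0) := by rw [h1, mul_one]
    _ = (ν.prod ν) ((Ioi x) ×ˢ (Ici (0:ℝ))) := (Measure.prod_prod _ _).symm
    _ ≤ _ := measure_mono hsub

lemma rect_le_T2 (ν : Measure ℝ) [IsProbabilityMeasure ν] (x a : ℝ) :
    ν (Ioi (x - a)) * ν (Ioi a) ≤ (ν.prod ν) {p : ℝ × ℝ | x < p.1 + p.2} := by
  have hsub : (Ioi (x - a)) ×ˢ (Ioi a) ⊆ {p : ℝ × ℝ | x < p.1 + p.2} := by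
    intro p hp
    simp only [mem_prod, mem_Ioi, mem_setOf_eq] at *
    linarith [hp.1, hp.2]
  calc ν (Ioi (x - a)) * ν (Ioi a) = (ν.prod ν) ((Ioi (x - a)) ×ˢ (Ioi a)) :=
        (Measure.prod_prod _ _).symm
    _ ≤ _ := measure_mono hsub

lemma tail_tendsto_zero (ν : Measure ℝ) [IsFiniteMeasure ν] :
    Tendsto (fun x : ℝ => ν (Ioi x)) atTop (nhds 0) := by
  have hnat : Tendsto (fun m : ℕ => ν (Ioi (m : ℝ))) atTop (nhds 0) := by
    have hinter : (⋂ m : ℕ, Ioi (m : ℝ)) = ∅ := by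
      ext y
      simp only [mem_iInter, mem_Ioi, mem_empty_iff_false, iff_false, not_forall, not_lt]
      obtain ⟨m, hm⟩ := exists_nat_gt y
      exact ⟨m, hm.le⟩
    have h := tendsto_measure_iInter_atTop (μ := ν) (s := fun m : ℕ => Ioi (m : ℝ))
      (fun m => measurableSet_Ioi.nullMeasurableSet) (fun i j hij => by
        exact Ioi_subset_Ioi (by exact_mod_cast hij)) ⟨0, measure_ne_top _ _⟩
    rw [hinter] at h
    simpa [Function.comp_def] using h
  rw [ENNReal.tendsto_nhds_zero] at hnat ⊢
  intro ε hε
  obtain ⟨m, hm⟩ := (hnat ε hε).exists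
  filter_upwards [eventually_ge_atTop (m : ℝ)] with x hx
  exact le_trans (measure_mono (Ioi_subset_Ioi hx)) hm

lemma tail_real_tendsto_zero (ν : Measure ℝ) [IsFiniteMeasure ν] :
    Tendsto (fun x : ℝ => (ν (Ioi x)).toReal) atTop (nhds 0) := by
  have h0 : ((0:ENNReal) ≠ ⊤) := by simp
  have := (ENNReal.tendsto_toReal h0).comp (tail_tendsto_zero ν)
  simpa [Function.comp_def] using this


/-! ### Part 2 : extraction from MemJ -/

lemma measurableSet_maxSet (K x : ℝ) : MeasurableSet {p : ℝ × ℝ | x - K < max p.1 p.2} :=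
  measurableSet_lt measurable_const (measurable_fst.max measurable_snd)

lemma measurableSet_Dset (K x : ℝ) :
    MeasurableSet {p : ℝ × ℝ | x < p.1 + p.2 ∧ p.1 ≤ x - K ∧ p.2 ≤ x - K} := by
  apply MeasurableSet.inter (measurableSet_S x)
  exact (measurableSet_le measurable_fst measurable_const).inter
    (measurableSet_le measurable_snd measurable_const)

lemma pair_partition (ν : Measure ℝ) [IsProbabilityMeasure ν] (K x : ℝ) :
    (ν.prod ν) ({p : ℝ × ℝ | x - K < max p.1 p.2} ∩ {p | x < p.1 + p.2})
      + (ν.prod ν) {p : ℝ × ℝ | x < p.1 + p.2 ∧ p.1 ≤ x - K ∧ p.2 ≤ x - K}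
      = (ν.prod ν) {p : ℝ × ℝ | x < p.1 + p.2} := by
  have hD : {p : ℝ × ℝ | x < p.1 + p.2 ∧ p.1 ≤ x - K ∧ p.2 ≤ x - K}
      = {p : ℝ × ℝ | x < p.1 + p.2} \ {p : ℝ × ℝ | x - K < max p.1 p.2} := by
    ext p
    simp only [mem_setOf_eq, mem_diff, not_lt, max_le_iff]
    try tauto
  have hI : {p : ℝ × ℝ | x - K < max p.1 p.2} ∩ {p | x < p.1 + p.2}
      = {p : ℝ × ℝ | x < p.1 + p.2} ∩ {p : ℝ × ℝ | x - K < max p.1 p.2} := inter_comm _ _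
  rw [hD, hI]
  exact measure_inter_add_diff _ (measurableSet_maxSet K x)

lemma condPair_nonneg (ν : Measure ℝ) (A : Set (ℝ × ℝ)) (x : ℝ) : 0 ≤ condPair ν A x :=
  div_nonneg ENNReal.toReal_nonneg ENNReal.toReal_nonneg

lemma condPair_le_one (ν : Measure ℝ) [IsProbabilityMeasure ν] (A : Set (ℝ × ℝ)) (x : ℝ) :
    condPair ν A x ≤ 1 := by
  unfold condPair
  rcases eq_or_ne ((ν.prod ν) {p : ℝ × ℝ | x < p.1 + p.2}).toReal 0 with h | h
  · rw [h]; simp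
  · rw [div_le_one (lt_of_le_of_ne ENNReal.toReal_nonneg (Ne.symm h))]
    exact ENNReal.toReal_mono (measure_ne_top _ _) (measure_mono inter_subset_right)

/-- From `MemJ ν`: for every `ε > 0`, eventually in `K`, eventually in `x`,
the "no big jump" part has probability at most `ε` times `tail2 ν x`. -/
lemma J_small (ν : Measure ℝ) [IsProbabilityMeasure ν] (hJ : MemJ ν)
    (hpos : ∀ x : ℝ, 0 < tail2 ν x) {ε : ℝ} (hε : 0 < ε) :
    ∀ᶠ K in (atTop : Filter ℝ), ∀ᶠ x in (atTop : Filter ℝ),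
      ((ν.prod ν) {p : ℝ × ℝ | x < p.1 + p.2 ∧ p.1 ≤ x - K ∧ p.2 ≤ x - K}).toReal
        ≤ ε * tail2 ν x := by
  have h1 : (1:ℝ) - ε < 1 := by linarith
  filter_upwards [hJ.eventually (eventually_gt_nhds h1)] with K hK
  have hbdd : IsBoundedUnder (· ≥ ·) (atTop : Filter ℝ)
      (fun x : ℝ => condPair ν {p | x - K < max p.1 p.2} x) :=
    ⟨0, eventually_map.2 (Eventually.of_forall fun x => condPair_nonneg ν _ x)⟩
  filter_upwards [eventually_lt_of_lt_liminf hK hbdd] with x hx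
  set numE := (ν.prod ν) ({p : ℝ × ℝ | x - K < max p.1 p.2} ∩ {p | x < p.1 + p.2}) with hnum
  set DE := (ν.prod ν) {p : ℝ × ℝ | x < p.1 + p.2 ∧ p.1 ≤ x - K ∧ p.2 ≤ x - K} with hDE
  have hpart : numE.toReal + DE.toReal = tail2 ν x := by
    rw [← ENNReal.toReal_add (measure_ne_top _ _) (measure_ne_top _ _)]
    unfold tail2
    rw [pair_partition ν K x]
  have hx' : (1 - ε) * tail2 ν x < numE.toReal := by
    have hden : 0 < ((ν.prod ν) {p : ℝ × ℝ | x < p.1 + p.2}).toReal := hpos x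
    have h2 := hx
    unfold condPair at h2
    rw [lt_div_iff₀ hden] at h2
    exact h2
  linarith

/-- eventual `4 T(x-K₀)` bound for `tail2` -/
lemma T2_le_shift (ν : Measure ℝ) [IsProbabilityMeasure ν] (hJ : MemJ ν)
    (hpos : ∀ x : ℝ, 0 < tail2 ν x) :
    ∃ K₀ : ℝ, 0 ≤ K₀ ∧ ∀ᶠ x in (atTop : Filter ℝ), tail2 ν x ≤ 4 * tail ν (x - K₀) := by
  obtain ⟨K₀, hK₀, hK₀0⟩ := ((J_small ν hJ hpos (by norm_num : (0:ℝ) < 1/2)).and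
    (eventually_ge_atTop (0:ℝ))).exists
  refine ⟨K₀, hK₀0, ?_⟩
  filter_upwards [hK₀] with x hx
  have hnum : ((ν.prod ν) ({p : ℝ × ℝ | x - K₀ < max p.1 p.2} ∩ {p | x < p.1 + p.2})).toReal
      ≤ 2 * tail ν (x - K₀) := by
    have hsub : {p : ℝ × ℝ | x - K₀ < max p.1 p.2} ∩ {p | x < p.1 + p.2}
        ⊆ (Ioi (x - K₀) ×ˢ univ) ∪ (univ ×ˢ Ioi (x - K₀)) := by
      intro p hp
      rcases lt_max_iff.mp (show x - K₀ < max p.1 p.2 from hp.1) with h | h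
      · exact Or.inl ⟨h, mem_univ _⟩
      · exact Or.inr ⟨mem_univ _, h⟩
    have h2 : (ν.prod ν) ({p : ℝ × ℝ | x - K₀ < max p.1 p.2} ∩ {p | x < p.1 + p.2})
        ≤ ν (Ioi (x - K₀)) + ν (Ioi (x - K₀)) := by
      refine le_trans (measure_mono hsub) (le_trans (measure_union_le _ _) ?_)
      rw [Measure.prod_prod, Measure.prod_prod]
      simp [measure_univ]
    have := ENNReal.toReal_mono (by finiteness) h2
    rw [ENNReal.toReal_add (measure_ne_top _ _) (measure_ne_top _ _)] at this
    unfold tail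
    linarith
  have hpart : ((ν.prod ν) ({p : ℝ × ℝ | x - K₀ < max p.1 p.2} ∩ {p | x < p.1 + p.2})).toReal
      + ((ν.prod ν) {p : ℝ × ℝ | x < p.1 + p.2 ∧ p.1 ≤ x - K₀ ∧ p.2 ≤ x - K₀}).toReal
      = tail2 ν x := by
    rw [← ENNReal.toReal_add (measure_ne_top _ _) (measure_ne_top _ _)]
    unfold tail2
    rw [pair_partition ν K₀ x]
  linarith


/-! ### Part 3 : O-long-tailedness -/

lemma rect_le_T2_real (ν : Measure ℝ) [IsProbabilityMeasure ν] (x a : ℝ) :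
    tail ν (x - a) * tail ν a ≤ tail2 ν x := by
  have := ENNReal.toReal_mono (measure_ne_top _ _) (rect_le_T2 ν x a)
  rw [ENNReal.toReal_mul] at this
  exact this

lemma O_long (ν : Measure ℝ) [IsProbabilityMeasure ν] (htp : ∀ x : ℝ, 0 < tail ν x)
    (K₀ : ℝ) (hK₀ : ∀ᶠ x in (atTop : Filter ℝ), tail2 ν x ≤ 4 * tail ν (x - K₀))
    (s : ℝ) :
    ∃ D : ℝ, 0 < D ∧ ∀ᶠ x in (atTop : Filter ℝ), tail ν (x - s) ≤ D * tail ν x := by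
  refine ⟨4 / tail ν (s + K₀), div_pos (by norm_num) (htp _), ?_⟩
  rw [eventually_atTop] at hK₀ ⊢
  obtain ⟨a, ha⟩ := hK₀
  refine ⟨a - K₀, fun x hx => ?_⟩
  have hq := ha (x + K₀) (by linarith)
  have hrect := rect_le_T2_real ν (x + K₀) (s + K₀)
  have he : x + K₀ - (s + K₀) = x - s := by ring
  have he2 : x + K₀ - K₀ = x := by ring
  rw [he] at hrect
  rw [he2] at hq
  have h0 : 0 < tail ν (s + K₀) := htp _
  rw [div_mul_eq_mul_div, le_div_iff₀ h0]
  nlinarith [htp (x - s), htp x]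


/-! ### Part 4 : the min-event is small -/

lemma toReal_le_add3 {a b c d : ENNReal} (hb : b ≠ ⊤) (hc : c ≠ ⊤) (hd : d ≠ ⊤)
    (h : a ≤ b + c + d) : a.toReal ≤ b.toReal + c.toReal + d.toReal := by
  have := ENNReal.toReal_mono (by finiteness) h
  rwa [ENNReal.toReal_add (by finiteness) hd, ENNReal.toReal_add hb hc] at this

lemma tail_le_T2_real (ν : Measure ℝ) [IsProbabilityMeasure ν] (hnn : ν (Iio 0) = 0) (x : ℝ) :
    tail ν x ≤ tail2 ν x :=
  ENNReal.toReal_mono (measure_ne_top _ _) (tail_le_T2 ν hnn x)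

lemma tail_anti (ν : Measure ℝ) [IsProbabilityMeasure ν] {a b : ℝ} (h : a ≤ b) :
    tail ν b ≤ tail ν a :=
  ENNReal.toReal_mono (measure_ne_top _ _) (measure_mono (Ioi_subset_Ioi h))

lemma measurableSet_Mset (t x : ℝ) :
    MeasurableSet {p : ℝ × ℝ | t < p.1 ∧ t < p.2 ∧ x < p.1 + p.2} :=
  ((measurableSet_lt measurable_const measurable_fst).inter
    ((measurableSet_lt measurable_const measurable_snd).inter (measurableSet_S x)))

lemma min_event_small (ν : Measure ℝ) [IsProbabilityMeasure ν] (hJ : MemJ ν)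
    (hnn : ν (Iio 0) = 0)
    (hpos : ∀ x : ℝ, 0 < tail2 ν x) (htp : ∀ x : ℝ, 0 < tail ν x)
    (K₀ : ℝ) (hK₀ : ∀ᶠ x in (atTop : Filter ℝ), tail2 ν x ≤ 4 * tail ν (x - K₀))
    {η : ℝ} (hη : 0 < η) :
    ∃ t₀ : ℝ, 0 ≤ t₀ ∧ ∀ t, t₀ ≤ t → ∀ᶠ x in (atTop : Filter ℝ),
      ((ν.prod ν) {p : ℝ × ℝ | t < p.1 ∧ t < p.2 ∧ x < p.1 + p.2}).toReal
        ≤ η * tail2 ν x := by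
  obtain ⟨K₂, hK₂⟩ := (J_small ν hJ hpos (by linarith : (0:ℝ) < η/2)).exists
  obtain ⟨D, hD0, hD⟩ := O_long ν htp K₀ hK₀ K₂
  obtain ⟨t₀, ht₀, ht₀0⟩ := ((tail_real_tendsto_zero ν).eventually
    (eventually_le_nhds (show (0:ℝ) < η/(4*D) by positivity))).and
    (eventually_ge_atTop (0:ℝ)) |>.exists
  refine ⟨t₀, ht₀0, fun t ht => ?_⟩
  have htt : tail ν t ≤ η / (4*D) := le_trans (tail_anti ν ht) ht₀
  filter_upwards [hK₂, hD] with x hx hDx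
  have hsub : {p : ℝ × ℝ | t < p.1 ∧ t < p.2 ∧ x < p.1 + p.2}
      ⊆ {p : ℝ × ℝ | x < p.1 + p.2 ∧ p.1 ≤ x - K₂ ∧ p.2 ≤ x - K₂}
        ∪ (Ioi (x - K₂) ×ˢ Ioi t) ∪ (Ioi t ×ˢ Ioi (x - K₂)) := by
    intro p hp
    obtain ⟨h1, h2, h3⟩ := hp
    by_cases c1 : p.1 ≤ x - K₂
    · by_cases c2 : p.2 ≤ x - K₂
      · exact Or.inl (Or.inl ⟨h3, c1, c2⟩)
      · exact Or.inr ⟨h1, lt_of_not_ge c2⟩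
    · exact Or.inl (Or.inr ⟨lt_of_not_ge c1, h2⟩)
  have hm : (ν.prod ν) {p : ℝ × ℝ | t < p.1 ∧ t < p.2 ∧ x < p.1 + p.2}
      ≤ (ν.prod ν) {p : ℝ × ℝ | x < p.1 + p.2 ∧ p.1 ≤ x - K₂ ∧ p.2 ≤ x - K₂}
        + (ν.prod ν) ((Ioi (x - K₂)) ×ˢ (Ioi t)) + (ν.prod ν) ((Ioi t) ×ˢ (Ioi (x - K₂))) :=
    le_trans (measure_mono hsub) (le_trans (measure_union_le _ _)
      (add_le_add_left (measure_union_le _ _) _))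
  have hreal := toReal_le_add3 (measure_ne_top _ _) (measure_ne_top _ _) (measure_ne_top _ _) hm
  rw [Measure.prod_prod, Measure.prod_prod, ENNReal.toReal_mul, ENNReal.toReal_mul] at hreal
  have e1 : (ν (Ioi (x - K₂))).toReal = tail ν (x - K₂) := rfl
  have e2 : (ν (Ioi t)).toReal = tail ν t := rfl
  rw [e1, e2] at hreal
  have hb1 : tail ν (x - K₂) * tail ν t ≤ (D * tail ν x) * (η/(4*D)) := by
    have h1 : 0 ≤ tail ν t := ENNReal.toReal_nonneg
    have h2 : 0 ≤ tail ν (x - K₂) := ENNReal.toReal_nonneg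
    exact mul_le_mul hDx htt h1 (mul_nonneg hD0.le ENNReal.toReal_nonneg)
  have hb2 : (D * tail ν x) * (η/(4*D)) = (η/4) * tail ν x := by
    field_simp
  have hb3 : tail ν x ≤ tail2 ν x := tail_le_T2_real ν hnn x
  have h0 : 0 ≤ tail2 ν x := le_of_lt (hpos x)
  have h4 : 0 < η/4 := by linarith
  nlinarith [hx, hreal, hb1]


/-! ### Part 5 : the cross lemma (double Fubini flip) -/

lemma cross_section_fst (t x a : ℝ) :
    (Prod.mk a ⁻¹' {p : ℝ × ℝ | t < p.1 ∧ t < p.2 ∧ x < p.1 + p.2})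
      = if t < a then Ioi (max t (x - a)) else ∅ := by
  by_cases h : t < a
  · rw [if_pos h]
    ext b
    simp only [mem_preimage, mem_setOf_eq, mem_Ioi, max_lt_iff, h, true_and]
    constructor
    · rintro ⟨h1, h2⟩; exact ⟨h1, by linarith⟩
    · rintro ⟨h1, h2⟩; exact ⟨h1, by linarith⟩
  · rw [if_neg h]
    ext b
    simp only [mem_preimage, mem_setOf_eq, mem_empty_iff_false, iff_false]
    tauto

lemma cross_section_snd (t x b : ℝ) :
    ((fun a => (a, b)) ⁻¹' {p : ℝ × ℝ | t < p.1 ∧ t < p.2 ∧ x < p.1 + p.2})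
      = if t < b then Ioi (max t (x - b)) else ∅ := by
  by_cases h : t < b
  · rw [if_pos h]
    ext a
    simp only [mem_preimage, mem_setOf_eq, mem_Ioi, max_lt_iff, h, true_and]
    constructor
    · rintro ⟨h1, h2⟩; exact ⟨h1, by linarith⟩
    · rintro ⟨h1, h2⟩; exact ⟨h1, by linarith⟩
  · rw [if_neg h]
    ext a
    simp only [mem_preimage, mem_setOf_eq, mem_empty_iff_false, iff_false]
    tauto

lemma cross_le (σ τ G : Measure ℝ) [IsProbabilityMeasure σ] [IsProbabilityMeasure τ]
    [IsProbabilityMeasure G]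
    (hσ : ∀ y : ℝ, σ (Ioi y) ≤ G (Ioi y)) (hτ : ∀ y : ℝ, τ (Ioi y) ≤ G (Ioi y)) (t x : ℝ) :
    (σ.prod τ) {p : ℝ × ℝ | t < p.1 ∧ t < p.2 ∧ x < p.1 + p.2}
      ≤ (G.prod G) {p : ℝ × ℝ | t < p.1 ∧ t < p.2 ∧ x < p.1 + p.2} := by
  set E := {p : ℝ × ℝ | t < p.1 ∧ t < p.2 ∧ x < p.1 + p.2} with hE
  have hEm : MeasurableSet E := measurableSet_Mset t x
  have step1 : (σ.prod τ) E ≤ (σ.prod G) E := by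
    rw [Measure.prod_apply hEm, Measure.prod_apply hEm]
    refine lintegral_mono fun a => ?_
    rw [cross_section_fst t x a]
    by_cases h : t < a
    · simp only [if_pos h]; exact hτ _
    · simp only [if_neg h, measure_empty]; exact le_refl 0
  have step2 : (σ.prod G) E ≤ (G.prod G) E := by
    rw [Measure.prod_apply_symm hEm, Measure.prod_apply_symm hEm]
    refine lintegral_mono fun b => ?_
    rw [cross_section_snd t x b]
    by_cases h : t < b
    · simp only [if_pos h]; exact hσ _
    · simp only [if_neg h, measure_empty]; exact le_refl 0
  exact le_trans step1 step2


/-! ### Part 6 : the decomposition recursion -/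

noncomputable def Gfun (μ : Measure ℝ) (n : ℕ) (t x : ℝ) (k : ℕ) : ENNReal :=
  ((nconv μ k).prod (nconv μ (n - k))) {q : ℝ × ℝ | x < q.1 + q.2 ∧ q.2 ≤ ((n:ℝ) - (k:ℝ)) * t}

lemma measurableSet_Gev (c x : ℝ) :
    MeasurableSet {q : ℝ × ℝ | x < q.1 + q.2 ∧ q.2 ≤ c} :=
  (measurableSet_S x).inter (measurableSet_le measurable_snd measurable_const)

lemma G_top (μ : Measure ℝ) [IsProbabilityMeasure μ] (n : ℕ) (t x : ℝ) :
    (nconv μ n) (Ioi x) ≤ Gfun μ n t x n := by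
  unfold Gfun
  rw [Nat.sub_self]
  show _ ≤ ((nconv μ n).prod (Measure.dirac 0)) _
  rw [Measure.prod_dirac, Measure.map_apply measurable_prodMk_right
    (measurableSet_Gev _ x)]
  apply measure_mono
  intro a ha
  simp only [mem_preimage, mem_setOf_eq]
  constructor
  · simpa using ha
  · simp

lemma G_one (μ : Measure ℝ) [IsProbabilityMeasure μ] (n : ℕ) (t x : ℝ) :
    Gfun μ n t x 1 ≤ μ (Ioi (x - ((n:ℝ) - 1) * t)) := by
  unfold Gfun
  have h1 : IsProbabilityMeasure (nconv μ (n-1)) := nconv_prob μ _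
  rw [nconv_one]
  have hsub : {q : ℝ × ℝ | x < q.1 + q.2 ∧ q.2 ≤ ((n:ℝ) - 1) * t}
      ⊆ (Ioi (x - ((n:ℝ) - 1) * t)) ×ˢ univ := by
    intro q hq
    refine ⟨?_, mem_univ _⟩
    simp only [mem_Ioi]
    have := hq.1
    have := hq.2
    linarith
  calc _ ≤ (μ.prod (nconv μ (n-1))) ((Ioi (x - ((n:ℝ) - 1) * t)) ×ˢ univ) := by
        refine measure_mono ?_
        simpa using hsub
    _ = μ (Ioi (x - ((n:ℝ) - 1) * t)) := by
        rw [Measure.prod_prod, measure_univ, mul_one]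

lemma G_step (μ : Measure ℝ) [IsProbabilityMeasure μ] (hnn : μ (Iio 0) = 0)
    (n : ℕ) (t x : ℝ) (ht : 0 ≤ t) (j : ℕ) (hj : j + 2 ≤ n) :
    Gfun μ n t x (j + 2) ≤ Gfun μ n t x (j + 1) + μ (Ioi (x - ((n:ℝ) - 1) * t))
      + ((nconv μ n).prod (nconv μ n)) {p : ℝ × ℝ | t < p.1 ∧ t < p.2 ∧ x < p.1 + p.2} := by
  classical
  set A := nconv μ (j + 1) with hA
  set Cm := nconv μ (n - (j + 2)) with hCm
  have hAp : IsProbabilityMeasure A := nconv_prob μ _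
  have hCp : IsProbabilityMeasure Cm := nconv_prob μ _
  have hHp : IsProbabilityMeasure (nconv μ n) := nconv_prob μ _
  set μ₃ := (A.prod μ).prod Cm with hμ₃
  -- identification of `nconv μ (j+2)` with a map applied to `μ₃`
  have hconv : nconv μ (j+2) = conv A μ := rfl
  have hprodmap : (nconv μ (j+2)).prod Cm
      = Measure.map (Prod.map (fun p : ℝ × ℝ => p.1 + p.2) id) μ₃ := by
    rw [hconv]
    show (Measure.map (fun p : ℝ × ℝ => p.1 + p.2) (A.prod μ)).prod Cm = _
    conv_lhs => rw [← Measure.map_id (μ := Cm)]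
    exact Measure.map_prod_map _ _ measurable_addfun measurable_id
  have hGev := measurableSet_Gev (((n:ℝ) - ((j:ℝ)+2)) * t) x
  have hG2 : Gfun μ n t x (j + 2) = μ₃ {q : (ℝ × ℝ) × ℝ |
      x < q.1.1 + q.1.2 + q.2 ∧ q.2 ≤ ((n:ℝ) - ((j:ℝ)+2)) * t} := by
    unfold Gfun
    rw [hprodmap]
    rw [Measure.map_apply (measurable_addfun.prodMap measurable_id) (by
      push_cast
      exact measurableSet_Gev _ x)]
    congr 1
    ext q
    simp only [mem_preimage, Prod.map_apply, id_eq, mem_setOf_eq]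
    push_cast
    tauto
  -- the three target events
  set E₁ := {q : (ℝ × ℝ) × ℝ |
      x < q.1.1 + (q.1.2 + q.2) ∧ q.1.2 + q.2 ≤ ((n:ℝ) - ((j:ℝ)+1)) * t} with hE₁
  set E₂ := {q : (ℝ × ℝ) × ℝ |
      t < q.1.1 + q.2 ∧ t < q.1.2 ∧ x < (q.1.1 + q.2) + q.1.2} with hE₂
  set E₃ := {q : (ℝ × ℝ) × ℝ | x - ((n:ℝ) - 1) * t < q.1.2} with hE₃
  set N := {q : (ℝ × ℝ) × ℝ | q.2 < 0} with hN
  have hsub : {q : (ℝ × ℝ) × ℝ |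
      x < q.1.1 + q.1.2 + q.2 ∧ q.2 ≤ ((n:ℝ) - ((j:ℝ)+2)) * t} ⊆ E₁ ∪ E₂ ∪ E₃ ∪ N := by
    rintro ⟨⟨a, b⟩, c⟩ ⟨hq1, hq2⟩
    simp only [mem_setOf_eq] at hq1 hq2
    by_cases hc : c < 0
    · exact Or.inr hc
    push_neg at hc
    by_cases hb : b ≤ t
    · refine Or.inl (Or.inl (Or.inl ⟨?_, ?_⟩)) <;> simp only [mem_setOf_eq]
      · show x < a + (b + c)
        linarith
      · show b + c ≤ ((n:ℝ) - ((j:ℝ)+1)) * t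
        nlinarith
    · push_neg at hb
      by_cases ha : t < a
      · refine Or.inl (Or.inl (Or.inr ⟨?_, ?_, ?_⟩)) <;> simp only [mem_setOf_eq]
        · show t < a + c
          linarith
        · exact hb
        · show x < (a + c) + b
          linarith
      · push_neg at ha
        refine Or.inl (Or.inr ?_)
        show x - ((n:ℝ) - 1) * t < b
        have hj1 : (1:ℝ) ≤ (n:ℝ) - ((j:ℝ)+1) := by
          have : (j:ℝ) + 2 ≤ (n:ℝ) := by exact_mod_cast hj
          linarith
        have ht2 : ((n:ℝ) - ((j:ℝ)+1)) * t ≤ ((n:ℝ) - 1) * t := by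
          apply mul_le_mul_of_nonneg_right _ ht
          have : (0:ℝ) ≤ (j:ℝ) := Nat.cast_nonneg j
          linarith
        nlinarith
  -- measure of N is zero
  have hNnull : μ₃ N = 0 := by
    have : N = univ ×ˢ (Iio 0) := by ext q; simp [hN]
    rw [this, Measure.prod_prod, nconv_null_neg μ hnn, mul_zero]
  -- E₁ bound
  have hE₁m : MeasurableSet E₁ := by
    apply MeasurableSet.inter
    · exact measurableSet_lt measurable_const
        ((measurable_fst.comp measurable_fst).add
          ((measurable_snd.comp measurable_fst).add measurable_snd))
    · exact measurableSet_le ((measurable_snd.comp measurable_fst).add measurable_snd)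
        measurable_const
  have hidx : n - (j+2) + 1 = n - (j+1) := by omega
  have hb1 : μ₃ E₁ ≤ Gfun μ n t x (j + 1) := by
    have hφ : Measurable (fun q : (ℝ × ℝ) × ℝ => (q.1.1, q.1.2 + q.2)) :=
      (measurable_fst.comp measurable_fst).prodMk
        ((measurable_snd.comp measurable_fst).add measurable_snd)
    have hmap : Measure.map (fun q : (ℝ × ℝ) × ℝ => (q.1.1, q.1.2 + q.2)) μ₃
        = A.prod (nconv μ (n - (j + 1))) := by
      have hcomp : (fun q : (ℝ × ℝ) × ℝ => (q.1.1, q.1.2 + q.2))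
          = (Prod.map (id : ℝ → ℝ) (fun p : ℝ × ℝ => p.1 + p.2))
            ∘ ⇑MeasurableEquiv.prodAssoc := rfl
      rw [hcomp, ← Measure.map_map (measurable_id.prodMap measurable_addfun)
        (MeasurableEquiv.prodAssoc).measurable, Measure.prodAssoc_prod,
        ← Measure.map_prod_map _ _ measurable_id measurable_addfun, Measure.map_id]
      congr 1
      have h1 : Measure.map (fun p : ℝ × ℝ => p.1 + p.2) (μ.prod Cm) = conv μ Cm := rfl
      have h2 : conv Cm μ = nconv μ (n - (j+2) + 1) := rfl
      rw [h1, conv_comm, h2, hidx]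
    have hS' : MeasurableSet {q : ℝ × ℝ | x < q.1 + q.2 ∧ q.2 ≤ ((n:ℝ) - ((j:ℝ)+1)) * t} :=
      measurableSet_Gev _ x
    have hpre : E₁ = (fun q : (ℝ × ℝ) × ℝ => (q.1.1, q.1.2 + q.2)) ⁻¹'
        {q : ℝ × ℝ | x < q.1 + q.2 ∧ q.2 ≤ ((n:ℝ) - ((j:ℝ)+1)) * t} := rfl
    rw [hpre, ← Measure.map_apply hφ hS', hmap]
    apply le_of_eq
    unfold Gfun
    have hc : ((n:ℝ) - (((j+1) : ℕ):ℝ)) * t = ((n:ℝ) - ((j:ℝ)+1)) * t := by push_cast; ring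
    rw [hc]
  -- E₂ bound
  have hE₂m : MeasurableSet E₂ := by
    refine MeasurableSet.inter ?_ (MeasurableSet.inter ?_ ?_)
    · exact measurableSet_lt measurable_const
        ((measurable_fst.comp measurable_fst).add measurable_snd)
    · exact measurableSet_lt measurable_const (measurable_snd.comp measurable_fst)
    · exact measurableSet_lt measurable_const
        (((measurable_fst.comp measurable_fst).add measurable_snd).add
          (measurable_snd.comp measurable_fst))
  have hb2 : μ₃ E₂ ≤ ((nconv μ n).prod (nconv μ n))
      {p : ℝ × ℝ | t < p.1 ∧ t < p.2 ∧ x < p.1 + p.2} := by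
    have hψ : Measurable (fun q : (ℝ × ℝ) × ℝ => (q.1.1 + q.2, q.1.2)) :=
      ((measurable_fst.comp measurable_fst).add measurable_snd).prodMk
        (measurable_snd.comp measurable_fst)
    have hmap : Measure.map (fun q : (ℝ × ℝ) × ℝ => (q.1.1 + q.2, q.1.2)) μ₃
        = (nconv μ (n-1)).prod μ := by
      have hcomp : (fun q : (ℝ × ℝ) × ℝ => (q.1.1 + q.2, q.1.2))
          = (Prod.map (fun p : ℝ × ℝ => p.1 + p.2) (id : ℝ → ℝ))
            ∘ (⇑(MeasurableEquiv.prodAssoc (α := ℝ) (β := ℝ) (γ := ℝ)).symm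
              ∘ ((Prod.map (id : ℝ → ℝ) (Prod.swap : ℝ × ℝ → ℝ × ℝ))
                ∘ ⇑MeasurableEquiv.prodAssoc)) := rfl
      rw [hcomp]
      rw [← Measure.map_map (measurable_addfun.prodMap measurable_id)
        ((MeasurableEquiv.prodAssoc.symm).measurable.comp
          ((measurable_id.prodMap measurable_swap).comp
            (MeasurableEquiv.prodAssoc).measurable))]
      rw [← Measure.map_map (MeasurableEquiv.prodAssoc.symm).measurable
        ((measurable_id.prodMap measurable_swap).comp
          (MeasurableEquiv.prodAssoc).measurable)]
      rw [← Measure.map_map (measurable_id.prodMap measurable_swap)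
        (MeasurableEquiv.prodAssoc).measurable]
      rw [Measure.prodAssoc_prod]
      rw [← Measure.map_prod_map _ _ measurable_id measurable_swap, Measure.map_id,
        Measure.prod_swap]
      have hsymm : Measure.map (⇑(MeasurableEquiv.prodAssoc
          (α := ℝ) (β := ℝ) (γ := ℝ)).symm) (A.prod (Cm.prod μ)) = (A.prod Cm).prod μ := by
        rw [← Measure.prodAssoc_prod, Measure.map_map
          (MeasurableEquiv.prodAssoc.symm).measurable
          (MeasurableEquiv.prodAssoc).measurable]
        simp
      rw [hsymm, ← Measure.map_prod_map _ _ measurable_addfun measurable_id, Measure.map_id]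
      congr 1
      have h1 : Measure.map (fun p : ℝ × ℝ => p.1 + p.2) (A.prod Cm) = conv A Cm := rfl
      rw [h1, hA, hCm, nconv_add]
      congr 1
      omega
    have hMm := measurableSet_Mset t x
    have hpre : E₂ = (fun q : (ℝ × ℝ) × ℝ => (q.1.1 + q.2, q.1.2)) ⁻¹'
        {p : ℝ × ℝ | t < p.1 ∧ t < p.2 ∧ x < p.1 + p.2} := rfl
    rw [hpre, ← Measure.map_apply hψ hMm, hmap]
    have h1 : IsProbabilityMeasure (nconv μ (n-1)) := nconv_prob μ _
    refine cross_le _ _ _ (fun y => tail_nconv_mono μ hnn (Nat.sub_le n 1) y)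
      (fun y => tail_mu_le_nconv μ hnn (by omega) y) t x
  -- E₃ bound
  have hb3 : μ₃ E₃ ≤ μ (Ioi (x - ((n:ℝ) - 1) * t)) := by
    have : E₃ = ((univ : Set ℝ) ×ˢ (Ioi (x - ((n:ℝ) - 1) * t))) ×ˢ (univ : Set ℝ) := by
      ext q; simp [hE₃]
    rw [this, Measure.prod_prod, Measure.prod_prod]
    simp [measure_univ]
  -- putting it together
  rw [hG2]
  calc μ₃ {q : (ℝ × ℝ) × ℝ | x < q.1.1 + q.1.2 + q.2 ∧ q.2 ≤ ((n:ℝ) - ((j:ℝ)+2)) * t}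
      ≤ μ₃ (E₁ ∪ E₂ ∪ E₃ ∪ N) := measure_mono hsub
    _ ≤ μ₃ (E₁ ∪ E₂ ∪ E₃) + μ₃ N := measure_union_le _ _
    _ = μ₃ (E₁ ∪ E₂ ∪ E₃) := by rw [hNnull, add_zero]
    _ ≤ μ₃ (E₁ ∪ E₂) + μ₃ E₃ := measure_union_le _ _
    _ ≤ μ₃ E₁ + μ₃ E₂ + μ₃ E₃ := add_le_add_left (measure_union_le _ _) _
    _ ≤ Gfun μ n t x (j + 1) + ((nconv μ n).prod (nconv μ n))
          {p : ℝ × ℝ | t < p.1 ∧ t < p.2 ∧ x < p.1 + p.2} + μ (Ioi (x - ((n:ℝ) - 1) * t)) :=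
        add_le_add (add_le_add hb1 hb2) hb3
    _ = _ := by ring


lemma G_unroll (μ : Measure ℝ) [IsProbabilityMeasure μ] (hnn : μ (Iio 0) = 0)
    (n : ℕ) (t x : ℝ) (ht : 0 ≤ t) :
    ∀ m : ℕ, m + 1 ≤ n → Gfun μ n t x (m + 1)
      ≤ (m+1 : ENNReal) * μ (Ioi (x - ((n:ℝ) - 1) * t))
        + (m : ENNReal) * ((nconv μ n).prod (nconv μ n))
            {p : ℝ × ℝ | t < p.1 ∧ t < p.2 ∧ x < p.1 + p.2} := by
  intro m
  induction m with
  | zero =>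
      intro _
      simpa using G_one μ n t x
  | succ m ih =>
      intro hm
      have h1 := G_step μ hnn n t x ht m hm
      have h2 := ih (by omega)
      calc Gfun μ n t x (m + 2) ≤ Gfun μ n t x (m+1) + μ (Ioi (x - ((n:ℝ) - 1) * t))
            + ((nconv μ n).prod (nconv μ n)) {p : ℝ × ℝ | t < p.1 ∧ t < p.2 ∧ x < p.1 + p.2} := h1
        _ ≤ ((m+1 : ENNReal) * μ (Ioi (x - ((n:ℝ) - 1) * t))
              + (m : ENNReal) * ((nconv μ n).prod (nconv μ n))
                  {p : ℝ × ℝ | t < p.1 ∧ t < p.2 ∧ x < p.1 + p.2})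
            + μ (Ioi (x - ((n:ℝ) - 1) * t))
            + ((nconv μ n).prod (nconv μ n))
                {p : ℝ × ℝ | t < p.1 ∧ t < p.2 ∧ x < p.1 + p.2} :=
            add_le_add_left (add_le_add_left h2 _) _
        _ = _ := by
            push_cast
            ring

lemma B_decomp (μ : Measure ℝ) [IsProbabilityMeasure μ] (hnn : μ (Iio 0) = 0)
    (n : ℕ) (hn : 1 ≤ n) (t x : ℝ) (ht : 0 ≤ t) :
    (nconv μ n) (Ioi x) ≤ (n : ENNReal) * μ (Ioi (x - ((n:ℝ) - 1) * t))
      + (n : ENNReal) * ((nconv μ n).prod (nconv μ n))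
          {p : ℝ × ℝ | t < p.1 ∧ t < p.2 ∧ x < p.1 + p.2} := by
  obtain ⟨m, rfl⟩ := Nat.exists_eq_add_of_le hn
  have h0 := G_top μ (1+m) t x
  have h1 := G_unroll μ hnn (1+m) t x ht m (by omega)
  have he : m + 1 = 1 + m := by omega
  rw [he] at h1
  refine le_trans h0 (le_trans h1 ?_)
  have hc : ((1+m : ℕ) : ENNReal) = (m : ENNReal) + 1 := by push_cast; ring
  rw [hc]
  have : (m : ENNReal) ≤ (m : ENNReal) + 1 := le_self_add
  gcongr

lemma B_decomp_real (μ : Measure ℝ) [IsProbabilityMeasure μ] (hnn : μ (Iio 0) = 0)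
    (n : ℕ) (hn : 1 ≤ n) (t x : ℝ) (ht : 0 ≤ t) :
    tail (nconv μ n) x ≤ (n : ℝ) * tail μ (x - ((n:ℝ) - 1) * t)
      + (n : ℝ) * (((nconv μ n).prod (nconv μ n))
          {p : ℝ × ℝ | t < p.1 ∧ t < p.2 ∧ x < p.1 + p.2}).toReal := by
  have hHp : IsProbabilityMeasure (nconv μ n) := nconv_prob μ n
  have h := B_decomp μ hnn n hn t x ht
  have := ENNReal.toReal_mono (by finiteness) h
  rw [ENNReal.toReal_add (by finiteness) (by finiteness), ENNReal.toReal_mul,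
    ENNReal.toReal_mul] at this
  simpa [tail] using this


/-! ### Part 7 : part B conclusion -/

lemma partB (μ : Measure ℝ) [IsProbabilityMeasure μ] (hnn : μ (Iio 0) = 0)
    (hub : ∀ x : ℝ, 0 < μ (Ioi x)) (n : ℕ) (hn : 2 ≤ n) (hJ : MemJ (nconv μ n)) :
    ∃ c : ℝ, 0 < c ∧ ∀ᶠ x in (atTop : Filter ℝ), c * tail (nconv μ n) x ≤ tail μ x := by
  have hHp : IsProbabilityMeasure (nconv μ n) := nconv_prob μ n
  have hHnn : (nconv μ n) (Iio 0) = 0 := nconv_null_neg μ hnn n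
  have htμ : ∀ x : ℝ, 0 < tail μ x := fun x =>
    ENNReal.toReal_pos (hub x).ne' (measure_ne_top _ _)
  have htp : ∀ x : ℝ, 0 < tail (nconv μ n) x := by
    intro x
    have h1 : 0 < (nconv μ n) (Ioi x) :=
      lt_of_lt_of_le (hub x) (tail_mu_le_nconv μ hnn (by omega) x)
    exact ENNReal.toReal_pos h1.ne' (measure_ne_top _ _)
  have hpos2 : ∀ x : ℝ, 0 < tail2 (nconv μ n) x := fun x =>
    lt_of_lt_of_le (htp x) (tail_le_T2_real _ hHnn x)
  obtain ⟨K₀, hK₀0, hK₀ev⟩ := T2_le_shift (nconv μ n) hJ hpos2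
  obtain ⟨D₀, hD₀, hD₀ev⟩ := O_long (nconv μ n) htp K₀ hK₀ev K₀
  have hnR : (0:ℝ) < (n:ℝ) := by
    have : (0:ℕ) < n := by omega
    exact_mod_cast this
  set η : ℝ := 1/(8*(n:ℝ)*D₀) with hη
  have hηpos : 0 < η := by
    rw [hη]
    positivity
  obtain ⟨t₀, ht₀0, hmin⟩ := min_event_small (nconv μ n) hJ hHnn hpos2 htp K₀ hK₀ev hηpos
  have hminev := hmin t₀ le_rfl
  set s : ℝ := ((n:ℝ) - 1) * t₀ with hs
  have hP : ∀ᶠ x in (atTop : Filter ℝ),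
      (1/2) * tail (nconv μ n) x ≤ (n:ℝ) * tail μ (x - s) := by
    filter_upwards [hK₀ev, hD₀ev, hminev] with x h4 hD hM
    have h1 := B_decomp_real μ hnn n (by omega) t₀ x ht₀0
    have h2 : (((nconv μ n).prod (nconv μ n))
        {p : ℝ × ℝ | t₀ < p.1 ∧ t₀ < p.2 ∧ x < p.1 + p.2}).toReal
        ≤ η * (4 * D₀ * tail (nconv μ n) x) := by
      refine le_trans hM ?_
      have := le_trans h4 (by nlinarith [htp x, htp (x - K₀)] :
        4 * tail (nconv μ n) (x - K₀) ≤ 4 * D₀ * tail (nconv μ n) x)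
      nlinarith [hpos2 x]
    have h3 : (n:ℝ) * (η * (4 * D₀ * tail (nconv μ n) x)) = (1/2) * tail (nconv μ n) x := by
      rw [hη]
      field_simp
      ring
    have h5 : (n:ℝ) * (((nconv μ n).prod (nconv μ n))
        {p : ℝ × ℝ | t₀ < p.1 ∧ t₀ < p.2 ∧ x < p.1 + p.2}).toReal
        ≤ (1/2) * tail (nconv μ n) x := by
      rw [← h3]
      exact mul_le_mul_of_nonneg_left h2 hnR.le
    linarith
  obtain ⟨D₁, hD₁, hD₁ev⟩ := O_long (nconv μ n) htp K₀ hK₀ev s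
  refine ⟨1/(2*(n:ℝ)*D₁), by positivity, ?_⟩
  rw [eventually_atTop] at hP hD₁ev ⊢
  obtain ⟨a₁, ha₁⟩ := hP
  obtain ⟨a₂, ha₂⟩ := hD₁ev
  refine ⟨max a₁ a₂ - s, fun x hx => ?_⟩
  have hp := ha₁ (x + s) (by
    have := le_max_left a₁ a₂
    linarith)
  have hd := ha₂ (x + s) (by
    have := le_max_right a₁ a₂
    linarith)
  have he : x + s - s = x := by ring
  rw [he] at hp hd
  rw [div_mul_eq_mul_div, div_le_iff₀ (by positivity)]
  nlinarith [htp (x+s), htμ x, htp x]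

/-! ### Part 8 : part C -/

lemma measurableSet_W (K x : ℝ) :
    MeasurableSet {p : ℝ × ℝ | K < p.2 ∧ p.2 ≤ x/2 ∧ x - p.2 < p.1} :=
  (measurableSet_lt measurable_const measurable_snd).inter
    ((measurableSet_le measurable_snd measurable_const).inter
      (measurableSet_lt (measurable_const.sub measurable_snd) measurable_fst))

lemma measurableSet_AK (K x : ℝ) :
    MeasurableSet {p : ℝ × ℝ | x/2 < p.1 ∧ max K (x - p.1) < p.2} :=
  (measurableSet_lt measurable_const measurable_fst).inter
    (measurableSet_lt (measurable_const.max (measurable_const.sub measurable_fst))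
      measurable_snd)

lemma W_section_snd (K x b : ℝ) :
    ((fun a => (a, b)) ⁻¹' {p : ℝ × ℝ | K < p.2 ∧ p.2 ≤ x/2 ∧ x - p.2 < p.1})
      = if K < b ∧ b ≤ x/2 then Ioi (x - b) else ∅ := by
  by_cases h : K < b ∧ b ≤ x/2
  · rw [if_pos h]
    ext a
    simp only [mem_preimage, mem_setOf_eq, mem_Ioi, h.1, h.2, true_and]
  · rw [if_neg h]
    ext a
    simp only [mem_preimage, mem_setOf_eq, mem_empty_iff_false, iff_false]
    tauto

/-- the Fubini-flip chain for part C -/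
lemma C2 (μ H : Measure ℝ) [IsProbabilityMeasure μ] [IsProbabilityMeasure H]
    (hdom : ∀ y : ℝ, μ (Ioi y) ≤ H (Ioi y)) (K x : ℝ) :
    (μ.prod μ) {p : ℝ × ℝ | K < p.2 ∧ p.2 ≤ x/2 ∧ x - p.2 < p.1}
      ≤ (H.prod H) {p : ℝ × ℝ | x/2 < p.1 ∧ max K (x - p.1) < p.2} := by
  set W := {p : ℝ × ℝ | K < p.2 ∧ p.2 ≤ x/2 ∧ x - p.2 < p.1} with hW
  set AK := {p : ℝ × ℝ | x/2 < p.1 ∧ max K (x - p.1) < p.2} with hAK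
  have hWm : MeasurableSet W := measurableSet_W K x
  have hAKm : MeasurableSet AK := measurableSet_AK K x
  have step1 : (μ.prod μ) W ≤ (H.prod μ) W := by
    rw [Measure.prod_apply_symm hWm, Measure.prod_apply_symm hWm]
    refine lintegral_mono fun b => ?_
    rw [W_section_snd K x b]
    by_cases h : K < b ∧ b ≤ x/2
    · simp only [if_pos h]; exact hdom _
    · simp only [if_neg h, measure_empty]; exact le_refl 0
  have step2 : (H.prod μ) W ≤ (H.prod H) AK := by
    rw [Measure.prod_apply hWm, Measure.prod_apply hAKm]
    refine lintegral_mono fun a => ?_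
    have hsec2 : (Prod.mk a ⁻¹' AK) = if x/2 < a then Ioi (max K (x - a)) else ∅ := by
      by_cases h : x/2 < a
      · rw [if_pos h]
        ext b
        simp only [mem_preimage, hAK, mem_setOf_eq, mem_Ioi, h, true_and]
      · rw [if_neg h]
        ext b
        simp only [mem_preimage, hAK, mem_setOf_eq, mem_empty_iff_false, iff_false]
        tauto
    rw [hsec2]
    by_cases h : x/2 < a
    · rw [if_pos h]
      refine le_trans (measure_mono ?_) (hdom _)
      intro b hb
      simp only [mem_preimage, hW, mem_setOf_eq] at hb
      simp only [mem_Ioi, max_lt_iff]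
      exact ⟨hb.1, by linarith [hb.2.2]⟩
    · rw [if_neg h]
      push_neg at h
      convert (zero_le : (0:ENNReal) ≤ _)
      have : (Prod.mk a ⁻¹' W) = ∅ := by
        ext b
        simp only [mem_preimage, hW, mem_setOf_eq, mem_empty_iff_false, iff_false]
        rintro ⟨h1, h2, h3⟩
        linarith
      rw [this, measure_empty]
  exact le_trans step1 step2


lemma C3 (ν : Measure ℝ) [IsProbabilityMeasure ν] (hJ : MemJ ν) (hnn : ν (Iio 0) = 0)
    (hpos : ∀ x : ℝ, 0 < tail2 ν x) (htp : ∀ x : ℝ, 0 < tail ν x)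
    (K₀ : ℝ) (hK₀ : ∀ᶠ x in (atTop : Filter ℝ), tail2 ν x ≤ 4 * tail ν (x - K₀))
    {ε : ℝ} (hε : 0 < ε) :
    ∃ K₁ : ℝ, ∀ K, K₁ ≤ K → ∀ᶠ x in (atTop : Filter ℝ),
      ((ν.prod ν) {p : ℝ × ℝ | x/2 < p.1 ∧ max K (x - p.1) < p.2}).toReal
        ≤ ε * tail2 ν x := by
  obtain ⟨K₂, hK₂⟩ := (J_small ν hJ hpos (by linarith : (0:ℝ) < ε/3)).exists
  obtain ⟨D₂, hD₂, hD₂ev⟩ := O_long ν htp K₀ hK₀ K₂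
  obtain ⟨K₁, hK₁⟩ := ((tail_real_tendsto_zero ν).eventually
    (eventually_le_nhds (show (0:ℝ) < ε/(3*D₂) by positivity))).exists
  refine ⟨K₁, fun K hK => ?_⟩
  have hKtail : tail ν K ≤ ε/(3*D₂) := le_trans (tail_anti ν hK) hK₁
  have hhalf : Tendsto (fun x : ℝ => x/2) atTop atTop :=
    tendsto_id.atTop_div_const (by norm_num)
  have hx2 : ∀ᶠ x in (atTop : Filter ℝ), tail ν (x/2) ≤ ε/(3*D₂) :=
    hhalf.eventually ((tail_real_tendsto_zero ν).eventually
      (eventually_le_nhds (show (0:ℝ) < ε/(3*D₂) by positivity)))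
  filter_upwards [hK₂, hD₂ev, hx2] with x hx1 hxD hxh
  have hsub : {p : ℝ × ℝ | x/2 < p.1 ∧ max K (x - p.1) < p.2}
      ⊆ {p : ℝ × ℝ | x < p.1 + p.2 ∧ p.1 ≤ x - K₂ ∧ p.2 ≤ x - K₂}
        ∪ (Ioi (x - K₂) ×ˢ Ioi K) ∪ (Ioi (x/2) ×ˢ Ioi (x - K₂)) := by
    rintro ⟨a, b⟩ ⟨h1, h2⟩
    rw [max_lt_iff] at h2
    by_cases c1 : x - K₂ < a
    · exact Or.inl (Or.inr ⟨c1, h2.1⟩)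
    · push_neg at c1
      by_cases c2 : x - K₂ < b
      · exact Or.inr ⟨h1, c2⟩
      · push_neg at c2
        exact Or.inl (Or.inl ⟨by linarith [h2.2], c1, c2⟩)
  have hm : (ν.prod ν) {p : ℝ × ℝ | x/2 < p.1 ∧ max K (x - p.1) < p.2}
      ≤ (ν.prod ν) {p : ℝ × ℝ | x < p.1 + p.2 ∧ p.1 ≤ x - K₂ ∧ p.2 ≤ x - K₂}
        + (ν.prod ν) ((Ioi (x - K₂)) ×ˢ (Ioi K)) + (ν.prod ν) ((Ioi (x/2)) ×ˢ (Ioi (x - K₂))) :=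
    le_trans (measure_mono hsub) (le_trans (measure_union_le _ _)
      (add_le_add_left (measure_union_le _ _) _))
  have hreal := toReal_le_add3 (measure_ne_top _ _) (measure_ne_top _ _) (measure_ne_top _ _) hm
  rw [Measure.prod_prod, Measure.prod_prod, ENNReal.toReal_mul, ENNReal.toReal_mul] at hreal
  have e1 : (ν (Ioi (x - K₂))).toReal = tail ν (x - K₂) := rfl
  have e2 : (ν (Ioi K)).toReal = tail ν K := rfl
  have e3 : (ν (Ioi (x/2))).toReal = tail ν (x/2) := rfl
  rw [e1, e2, e3] at hreal
  have ht2 : tail ν x ≤ tail2 ν x := tail_le_T2_real ν hnn x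
  have hb1 : tail ν (x - K₂) * tail ν K ≤ (ε/3) * tail2 ν x := by
    have h1 : tail ν (x - K₂) * tail ν K ≤ (D₂ * tail ν x) * (ε/(3*D₂)) :=
      mul_le_mul hxD hKtail ENNReal.toReal_nonneg
        (mul_nonneg hD₂.le ENNReal.toReal_nonneg)
    have h2 : (D₂ * tail ν x) * (ε/(3*D₂)) = (ε/3) * tail ν x := by
      field_simp
    rw [h2] at h1
    refine le_trans h1 ?_
    exact mul_le_mul_of_nonneg_left ht2 (by linarith)
  have hb2 : tail ν (x/2) * tail ν (x - K₂) ≤ (ε/3) * tail2 ν x := by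
    have h1 : tail ν (x/2) * tail ν (x - K₂) ≤ (ε/(3*D₂)) * (D₂ * tail ν x) :=
      mul_le_mul hxh hxD ENNReal.toReal_nonneg (by positivity)
    have h2 : (ε/(3*D₂)) * (D₂ * tail ν x) = (ε/3) * tail ν x := by
      field_simp
    rw [h2] at h1
    refine le_trans h1 ?_
    exact mul_le_mul_of_nonneg_left ht2 (by linarith)
  linarith


lemma Dsmall_mu (μ : Measure ℝ) [IsProbabilityMeasure μ] (hnn : μ (Iio 0) = 0)
    (hub : ∀ x : ℝ, 0 < μ (Ioi x)) (n : ℕ) (hn : 2 ≤ n) (hJ : MemJ (nconv μ n))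
    {ε : ℝ} (hε : 0 < ε) :
    ∃ K₁ : ℝ, ∀ K, K₁ ≤ K → ∀ᶠ x in (atTop : Filter ℝ),
      ((μ.prod μ) {p : ℝ × ℝ | x < p.1 + p.2 ∧ p.1 ≤ x - K ∧ p.2 ≤ x - K}).toReal
        ≤ ε * tail2 μ x := by
  have hHp : IsProbabilityMeasure (nconv μ n) := nconv_prob μ n
  have hHnn : (nconv μ n) (Iio 0) = 0 := nconv_null_neg μ hnn n
  have hdom : ∀ y : ℝ, μ (Ioi y) ≤ (nconv μ n) (Ioi y) :=
    fun y => tail_mu_le_nconv μ hnn (by omega) y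
  have htμ : ∀ x : ℝ, 0 < tail μ x := fun x =>
    ENNReal.toReal_pos (hub x).ne' (measure_ne_top _ _)
  have htp : ∀ x : ℝ, 0 < tail (nconv μ n) x := fun x =>
    ENNReal.toReal_pos (lt_of_lt_of_le (hub x) (hdom x)).ne' (measure_ne_top _ _)
  have hpos2 : ∀ x : ℝ, 0 < tail2 (nconv μ n) x := fun x =>
    lt_of_lt_of_le (htp x) (tail_le_T2_real _ hHnn x)
  have hdomr : ∀ y : ℝ, tail μ y ≤ tail (nconv μ n) y :=
    fun y => ENNReal.toReal_mono (measure_ne_top _ _) (hdom y)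
  obtain ⟨K₀, hK₀0, hK₀ev⟩ := T2_le_shift (nconv μ n) hJ hpos2
  obtain ⟨D₀, hD₀, hD₀ev⟩ := O_long (nconv μ n) htp K₀ hK₀ev K₀
  obtain ⟨c, hc, hcev⟩ := partB μ hnn hub n hn hJ
  set C : ℝ := 4*D₀/c with hC
  have hCpos : 0 < C := by rw [hC]; positivity
  have hC1 : ∀ᶠ x in (atTop : Filter ℝ), tail2 (nconv μ n) x ≤ C * tail2 μ x := by
    filter_upwards [hK₀ev, hD₀ev, hcev] with x h1 h2 h3
    have h4 : tail μ x ≤ tail2 μ x := tail_le_T2_real μ hnn x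
    have h5 : tail (nconv μ n) x ≤ (1/c) * tail μ x := by
      rw [div_mul_eq_mul_div, le_div_iff₀ hc]
      linarith [h3]
    calc tail2 (nconv μ n) x ≤ 4 * tail (nconv μ n) (x - K₀) := h1
      _ ≤ 4 * (D₀ * tail (nconv μ n) x) := by linarith
      _ ≤ 4 * (D₀ * ((1/c) * tail μ x)) := by
          have := mul_le_mul_of_nonneg_left h5 hD₀.le
          linarith
      _ ≤ 4 * (D₀ * ((1/c) * tail2 μ x)) := by
          have h6 : (0:ℝ) ≤ D₀ * (1/c) := by positivity
          nlinarith
      _ = C * tail2 μ x := by rw [hC]; field_simp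
  set ε₁ : ℝ := ε/(3*C) with hε₁
  have hε₁pos : 0 < ε₁ := by rw [hε₁]; positivity
  -- B₁ bound
  obtain ⟨t₀, ht₀0, hmin⟩ := min_event_small (nconv μ n) hJ hHnn hpos2 htp K₀ hK₀ev hε₁pos
  have hminev := hmin t₀ le_rfl
  have hB1 : ∀ᶠ x in (atTop : Filter ℝ),
      ((μ.prod μ) ((Ioi (x/2)) ×ˢ (Ioi (x/2)))).toReal ≤ ε₁ * tail2 (nconv μ n) x := by
    filter_upwards [hminev, eventually_ge_atTop (2*t₀)] with x h1 h2
    have hsub : (Ioi (x/2)) ×ˢ (Ioi (x/2))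
        ⊆ {p : ℝ × ℝ | t₀ < p.1 ∧ t₀ < p.2 ∧ x < p.1 + p.2} := by
      rintro ⟨a, b⟩ ⟨ha, hb⟩
      simp only [mem_Ioi] at ha hb
      refine ⟨by linarith, by linarith, by linarith⟩
    have hr : ((μ.prod μ) ((Ioi (x/2)) ×ˢ (Ioi (x/2)))).toReal
        ≤ (((nconv μ n).prod (nconv μ n))
            {p : ℝ × ℝ | t₀ < p.1 ∧ t₀ < p.2 ∧ x < p.1 + p.2}).toReal := by
      apply ENNReal.toReal_mono (measure_ne_top _ _)
      calc (μ.prod μ) ((Ioi (x/2)) ×ˢ (Ioi (x/2)))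
          ≤ ((nconv μ n).prod (nconv μ n)) ((Ioi (x/2)) ×ˢ (Ioi (x/2))) := by
            rw [Measure.prod_prod, Measure.prod_prod]
            exact mul_le_mul' (hdom _) (hdom _)
        _ ≤ _ := measure_mono hsub
    exact le_trans hr h1
  -- W bound
  obtain ⟨K₁, hK₁⟩ := C3 (nconv μ n) hJ hHnn hpos2 htp K₀ hK₀ev hε₁pos
  refine ⟨K₁, fun K hK => ?_⟩
  filter_upwards [hB1, hK₁ K hK, hC1] with x hx1 hx2 hx3
  -- decomposition at the μ level
  have hsub : {p : ℝ × ℝ | x < p.1 + p.2 ∧ p.1 ≤ x - K ∧ p.2 ≤ x - K}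
      ⊆ ((Ioi (x/2)) ×ˢ (Ioi (x/2)))
        ∪ {p : ℝ × ℝ | K < p.2 ∧ p.2 ≤ x/2 ∧ x - p.2 < p.1}
        ∪ {p : ℝ × ℝ | K < p.1 ∧ p.1 ≤ x/2 ∧ x - p.1 < p.2} := by
    rintro ⟨a, b⟩ ⟨h1, h2, h3⟩
    by_cases c2 : b ≤ x/2
    · refine Or.inl (Or.inr ⟨by linarith, c2, by linarith⟩)
    · push_neg at c2
      by_cases c1 : a ≤ x/2
      · refine Or.inr ⟨by linarith, c1, by linarith⟩
      · push_neg at c1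
        exact Or.inl (Or.inl ⟨c1, c2⟩)
  have hswap : (μ.prod μ) {p : ℝ × ℝ | K < p.1 ∧ p.1 ≤ x/2 ∧ x - p.1 < p.2}
      = (μ.prod μ) {p : ℝ × ℝ | K < p.2 ∧ p.2 ≤ x/2 ∧ x - p.2 < p.1} := by
    have hpre : {p : ℝ × ℝ | K < p.1 ∧ p.1 ≤ x/2 ∧ x - p.1 < p.2}
        = Prod.swap ⁻¹' {p : ℝ × ℝ | K < p.2 ∧ p.2 ≤ x/2 ∧ x - p.2 < p.1} := rfl
    rw [hpre, ← Measure.map_apply measurable_swap (measurableSet_W K x), Measure.prod_swap]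
  have hm : (μ.prod μ) {p : ℝ × ℝ | x < p.1 + p.2 ∧ p.1 ≤ x - K ∧ p.2 ≤ x - K}
      ≤ (μ.prod μ) ((Ioi (x/2)) ×ˢ (Ioi (x/2)))
        + (μ.prod μ) {p : ℝ × ℝ | K < p.2 ∧ p.2 ≤ x/2 ∧ x - p.2 < p.1}
        + (μ.prod μ) {p : ℝ × ℝ | K < p.1 ∧ p.1 ≤ x/2 ∧ x - p.1 < p.2} :=
    le_trans (measure_mono hsub) (le_trans (measure_union_le _ _)
      (add_le_add_left (measure_union_le _ _) _))
  rw [hswap] at hm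
  have hreal := toReal_le_add3 (measure_ne_top _ _) (measure_ne_top _ _) (measure_ne_top _ _) hm
  have hW : ((μ.prod μ) {p : ℝ × ℝ | K < p.2 ∧ p.2 ≤ x/2 ∧ x - p.2 < p.1}).toReal
      ≤ ε₁ * tail2 (nconv μ n) x := by
    have hWH := ENNReal.toReal_mono (measure_ne_top _ _) (C2 μ (nconv μ n) hdom K x)
    exact le_trans hWH hx2
  have htot : ((μ.prod μ) {p : ℝ × ℝ | x < p.1 + p.2 ∧ p.1 ≤ x - K ∧ p.2 ≤ x - K}).toReal
      ≤ 3 * ε₁ * tail2 (nconv μ n) x := by linarith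
  have hrel : 3 * ε₁ * (C * tail2 μ x) = ε * tail2 μ x := by
    rw [hε₁]
    field_simp
  have h2pos : 0 ≤ tail2 (nconv μ n) x := ENNReal.toReal_nonneg
  calc ((μ.prod μ) {p : ℝ × ℝ | x < p.1 + p.2 ∧ p.1 ≤ x - K ∧ p.2 ≤ x - K}).toReal
      ≤ 3 * ε₁ * tail2 (nconv μ n) x := htot
    _ ≤ 3 * ε₁ * (C * tail2 μ x) := by
        have : (0:ℝ) ≤ 3 * ε₁ := by positivity
        exact mul_le_mul_of_nonneg_left hx3 this
    _ = ε * tail2 μ x := hrel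


lemma partC (μ : Measure ℝ) [IsProbabilityMeasure μ] (hnn : μ (Iio 0) = 0)
    (hub : ∀ x : ℝ, 0 < μ (Ioi x)) (n : ℕ) (hn : 2 ≤ n) (hJ : MemJ (nconv μ n)) :
    MemJ μ := by
  have htμ : ∀ x : ℝ, 0 < tail μ x := fun x =>
    ENNReal.toReal_pos (hub x).ne' (measure_ne_top _ _)
  have ht2μ : ∀ x : ℝ, 0 < tail2 μ x := fun x =>
    lt_of_lt_of_le (htμ x) (tail_le_T2_real μ hnn x)
  unfold MemJ
  rw [tendsto_order]
  constructor
  · intro a ha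
    set ε : ℝ := (1 - a)/2 with hε
    have hεpos : 0 < ε := by rw [hε]; linarith
    obtain ⟨K₁, hK₁⟩ := Dsmall_mu μ hnn hub n hn hJ hεpos
    filter_upwards [eventually_ge_atTop K₁] with K hK
    have hev : ∀ᶠ x in (atTop : Filter ℝ),
        1 - ε ≤ condPair μ {p : ℝ × ℝ | x - K < max p.1 p.2} x := by
      filter_upwards [hK₁ K hK] with x hx
      have ht2pos : 0 < tail2 μ x := ht2μ x
      have hpart : ((μ.prod μ) ({p : ℝ × ℝ | x - K < max p.1 p.2}
            ∩ {p | x < p.1 + p.2})).toReal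
          + ((μ.prod μ) {p : ℝ × ℝ | x < p.1 + p.2 ∧ p.1 ≤ x - K ∧ p.2 ≤ x - K}).toReal
          = tail2 μ x := by
        rw [← ENNReal.toReal_add (measure_ne_top _ _) (measure_ne_top _ _)]
        unfold tail2
        rw [pair_partition μ K x]
      unfold condPair
      have hd : ((μ.prod μ) {p : ℝ × ℝ | x < p.1 + p.2}).toReal = tail2 μ x := rfl
      rw [hd, le_div_iff₀ ht2pos]
      nlinarith
    have hbdd : IsBoundedUnder (· ≤ ·) (atTop : Filter ℝ)
        (fun x : ℝ => condPair μ {p : ℝ × ℝ | x - K < max p.1 p.2} x) :=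
      ⟨1, eventually_map.2 (Eventually.of_forall fun x => condPair_le_one μ _ x)⟩
    have hcob := hbdd.isCoboundedUnder_ge
    calc a < 1 - ε := by rw [hε]; linarith
      _ ≤ _ := le_liminf_of_le hcob hev
  · intro a ha
    refine Eventually.of_forall fun K => ?_
    have hbdd : IsBoundedUnder (· ≥ ·) (atTop : Filter ℝ)
        (fun x : ℝ => condPair μ {p : ℝ × ℝ | x - K < max p.1 p.2} x) :=
      ⟨0, eventually_map.2 (Eventually.of_forall fun x => condPair_nonneg μ _ x)⟩
    have h1 : liminf (fun x : ℝ => condPair μ {p : ℝ × ℝ | x - K < max p.1 p.2} x) atTop ≤ 1 :=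
      liminf_le_of_frequently_le
        (Eventually.of_forall (fun x => condPair_le_one μ _ x)).frequently hbdd
    exact lt_of_le_of_lt h1 ha
theorem stmt13 (μ : Measure ℝ) [IsProbabilityMeasure μ]
    (hnn : μ (Set.Iio 0) = 0) (hub : ∀ x : ℝ, 0 < μ (Set.Ioi x))
    (n : ℕ) (hn : 2 ≤ n) (hJ : MemJ (nconv μ n)) :
    WeakTailEquiv μ (nconv μ n) ∧ MemJ μ := by
  have hHp : IsProbabilityMeasure (nconv μ n) := nconv_prob μ n
  refine ⟨⟨partB μ hnn hub n hn hJ, ⟨1, Eventually.of_forall fun x => ?_⟩⟩,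
    partC μ hnn hub n hn hJ⟩
  rw [one_mul]
  exact ENNReal.toReal_mono (measure_ne_top _ _) (tail_mu_le_nconv μ hnn (by omega) x)
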